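/- Let A : ℝ^d → ℝ^{d×d} with A(y) invertible for every y, let σ : ℝ^d → ℝ^{d×m}, let U : ℝ^d → ℝ and h : ℝ^d → ℝ be differentiable, and suppose that 𝒜_h(y) := (A(y)⁻¹)ᵀ·∇h(y) defines a differentiable map ℝ^d → ℝ^d. For ε ≠ 0 and η ∈ ℝ, define V(x,y) := ε²·(|x|² + 2U(y)) + η·ε·⟨x, 𝒜_h(y)⟩ + η·h(y) + 1 on ℝ^d × ℝ^d. Then for all (x,y) ∈ ℝ^d × ℝ^d, 𝓛_ε V(x,y) = −2⟨A(y)x, x⟩ + η·Σ_{i,j=1}^d x_i·x_j·∂_{y_j}(𝒜_h)_i(y) − η·⟨𝒜_h(y), ∇U(y)⟩ + 2·tr(σ(y)σ(y)ᵀ); in particular all singular terms of order ε^{−1} cancel exactly and the right-hand side does not depend on ε. -/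

import Mathlib

noncomputable section

open Matrix

/-- The `i`-th standard basis vector of `ℝ^d`. -/
def esingle {d : ℕ} (i : Fin d) : EuclideanSpace ℝ (Fin d) :=
  EuclideanSpace.single i 1

/-- The generator of the kinetic (Smoluchowski–Kramers) system:
`𝓛_ε f(x,y) = ε^{−2}[tr(σ(y)σ(y)ᵀ ∇ₓ²f) − ⟨A(y)x, ∇ₓf⟩]
  + ε^{−1}[⟨x, ∇_y f⟩ − ⟨∇U(y), ∇ₓf⟩]`. -/
def LKin {d m : ℕ}
    (A : EuclideanSpace ℝ (Fin d) → Matrix (Fin d) (Fin d) ℝ)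
    (σ : EuclideanSpace ℝ (Fin d) → Matrix (Fin d) (Fin m) ℝ)
    (U : EuclideanSpace ℝ (Fin d) → ℝ) (ε : ℝ)
    (f : EuclideanSpace ℝ (Fin d) → EuclideanSpace ℝ (Fin d) → ℝ)
    (x y : EuclideanSpace ℝ (Fin d)) : ℝ :=
  (ε ^ 2)⁻¹ *
      ((∑ i, ∑ j, (σ y * (σ y)ᵀ) i j *
          iteratedFDeriv ℝ 2 (fun x' => f x' y) x ![esingle j, esingle i])
        - ∑ i, (∑ j, A y i j * x j) * fderiv ℝ (fun x' => f x' y) x (esingle i))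
    + ε⁻¹ *
      ((∑ i, x i * fderiv ℝ (fun y' => f x y') y (esingle i))
        - ∑ i, fderiv ℝ U y (esingle i) * fderiv ℝ (fun x' => f x' y) x (esingle i))

/-- The Lyapunov function
`V(x,y) = ε²(|x|² + 2U(y)) + ηε⟨x, 𝒜(y)⟩ + ηh(y) + 1`. -/
def Vfun {d : ℕ} (U h : EuclideanSpace ℝ (Fin d) → ℝ)
    (𝒜 : EuclideanSpace ℝ (Fin d) → EuclideanSpace ℝ (Fin d)) (ε η : ℝ)
    (x y : EuclideanSpace ℝ (Fin d)) : ℝ :=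
  ε ^ 2 * (‖x‖ ^ 2 + 2 * U y) + η * ε * (∑ i, x i * 𝒜 y i) + η * h y + 1

/-- The inner product as a continuous linear map `E →L[ℝ] (E →L[ℝ] ℝ)`. -/
def innerCLM {d : ℕ} : EuclideanSpace ℝ (Fin d) →L[ℝ] (EuclideanSpace ℝ (Fin d) →L[ℝ] ℝ) :=
  LinearMap.toContinuousLinearMap
    { toFun := fun u => innerSL ℝ u
      map_add' := by intro u v; ext w; simp [inner_add_left]
      map_smul' := by intro c u; ext w; simp [inner_smul_left] }

@[simp] lemma innerCLM_apply {d : ℕ} (u v : EuclideanSpace ℝ (Fin d)) :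
    innerCLM u v = inner ℝ u v := rfl

section aux

variable {d : ℕ} {U h : EuclideanSpace ℝ (Fin d) → ℝ}
  {𝒜 : EuclideanSpace ℝ (Fin d) → EuclideanSpace ℝ (Fin d)} (ε η : ℝ)

lemma hasFDerivAt_Vx (x y : EuclideanSpace ℝ (Fin d)) :
    HasFDerivAt (fun x' => Vfun U h 𝒜 ε η x' y)
      ((2 * ε ^ 2) • innerCLM x + (η * ε) • innerCLM (𝒜 y)) x := by
  have h1 : HasFDerivAt (fun x' : EuclideanSpace ℝ (Fin d) => ‖x'‖ ^ 2) (2 • innerSL ℝ x) x := by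
    simpa using (hasFDerivAt_id x).norm_sq
  have h2 : HasFDerivAt (fun x' : EuclideanSpace ℝ (Fin d) => (inner ℝ (𝒜 y) x' : ℝ))
      (innerSL ℝ (𝒜 y)) x := (innerSL ℝ (𝒜 y)).hasFDerivAt
  have key : (fun x' => Vfun U h 𝒜 ε η x' y)
      = fun x' => (ε ^ 2 * ‖x'‖ ^ 2 + η * ε * (inner ℝ (𝒜 y) x' : ℝ))
          + (ε ^ 2 * (2 * U y) + η * h y + 1) := by
    funext x'
    have : (∑ i, x' i * 𝒜 y i) = (inner ℝ (𝒜 y) x' : ℝ) := by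
      rw [PiLp.inner_apply]
      exact Finset.sum_congr rfl fun i _ => by simp [mul_comm]
    simp only [Vfun, this]; ring
  rw [key]
  have := ((h1.const_mul (ε ^ 2)).add (h2.const_mul (η * ε))).add_const
    (ε ^ 2 * (2 * U y) + η * h y + 1)
  refine this.congr_fderiv ?_
  ext v
  simp [smul_smul]
  ring

lemma fderiv_Vx (x y : EuclideanSpace ℝ (Fin d)) (i : Fin d) :
    fderiv ℝ (fun x' => Vfun U h 𝒜 ε η x' y) x (esingle i)
      = 2 * ε ^ 2 * x i + η * ε * 𝒜 y i := by
  rw [(hasFDerivAt_Vx ε η x y).fderiv]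
  simp [esingle, EuclideanSpace.inner_single_right]

lemma fderiv2_Vx (x y : EuclideanSpace ℝ (Fin d)) (i j : Fin d) :
    iteratedFDeriv ℝ 2 (fun x' => Vfun U h 𝒜 ε η x' y) x ![esingle j, esingle i]
      = 2 * ε ^ 2 * (if i = j then 1 else 0) := by
  rw [iteratedFDeriv_two_apply]
  have hf : fderiv ℝ (fun x' => Vfun U h 𝒜 ε η x' y)
      = fun z => ((2 * ε ^ 2) • innerCLM) z + ((η * ε) • innerCLM (𝒜 y)) := by
    funext z
    rw [(hasFDerivAt_Vx ε η z y).fderiv]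
    simp
  rw [hf]
  have : HasFDerivAt
      (fun z : EuclideanSpace ℝ (Fin d) =>
        ((2 * ε ^ 2) • innerCLM) z + ((η * ε) • innerCLM (𝒜 y)))
      ((2 * ε ^ 2) • innerCLM) x := ((2 * ε ^ 2) • innerCLM).hasFDerivAt.add_const _
  rw [this.fderiv]
  simp [esingle, EuclideanSpace.inner_single_left, EuclideanSpace.single_apply]
  exact if_congr eq_comm rfl rfl

lemma fderiv_Vy (hU : Differentiable ℝ U) (hh : Differentiable ℝ h)
    (h𝒜diff : Differentiable ℝ 𝒜) (x y : EuclideanSpace ℝ (Fin d)) (i : Fin d) :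
    fderiv ℝ (fun y' => Vfun U h 𝒜 ε η x y') y (esingle i)
      = 2 * ε ^ 2 * fderiv ℝ U y (esingle i)
        + η * ε * (∑ k, x k * fderiv ℝ (fun y' => 𝒜 y' k) y (esingle i))
        + η * fderiv ℝ h y (esingle i) := by
  have hk : ∀ k : Fin d, HasFDerivAt (fun y' => 𝒜 y' k)
      (fderiv ℝ (fun y' => 𝒜 y' k) y) y := by
    intro k
    have hdk : DifferentiableAt ℝ (fun y' => 𝒜 y' k) y := by
      have := ((EuclideanSpace.proj (𝕜 := ℝ) k).differentiable.comp h𝒜diff) y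
      exact this
    exact hdk.hasFDerivAt
  have hsum : HasFDerivAt (fun y' => ∑ k, x k * 𝒜 y' k)
      (∑ k, x k • fderiv ℝ (fun y' => 𝒜 y' k) y) y :=
    HasFDerivAt.fun_sum fun k _ => (hk k).const_mul (x k)
  have hV : HasFDerivAt (fun y' => Vfun U h 𝒜 ε η x y')
      ((ε ^ 2) • ((2:ℝ) • fderiv ℝ U y)
        + (η * ε) • (∑ k, x k • fderiv ℝ (fun y' => 𝒜 y' k) y)
        + η • fderiv ℝ h y) y :=
    ((((((hU y).hasFDerivAt.const_mul 2).const_add (‖x‖ ^ 2)).const_mul (ε ^ 2)).add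
      (hsum.const_mul (η * ε))).add ((hh y).hasFDerivAt.const_mul η)).add_const 1
  rw [hV.fderiv]
  simp [ContinuousLinearMap.sum_apply, Finset.mul_sum]
  ring

end aux

/-- Key cancellation: `⟨Ax, A⁻ᵀ∇h⟩ = ⟨x, ∇h⟩`. -/
lemma key_cancel {d : ℕ} (A : EuclideanSpace ℝ (Fin d) → Matrix (Fin d) (Fin d) ℝ)
    (hAinv : ∀ y, IsUnit (A y)) (h : EuclideanSpace ℝ (Fin d) → ℝ)
    (𝒜 : EuclideanSpace ℝ (Fin d) → EuclideanSpace ℝ (Fin d))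
    (h𝒜def : ∀ y i, 𝒜 y i = ∑ j, (A y)⁻¹ j i * fderiv ℝ h y (esingle j))
    (x y : EuclideanSpace ℝ (Fin d)) :
    ∑ i, (∑ j, A y i j * x j) * 𝒜 y i = ∑ i, x i * fderiv ℝ h y (esingle i) := by
  have hBA : (A y)⁻¹ * A y = 1 :=
    Matrix.nonsing_inv_mul _ ((Matrix.isUnit_iff_isUnit_det _).mp (hAinv y))
  calc
    ∑ i, (∑ j, A y i j * x j) * 𝒜 y i
        = ∑ i, ∑ k, ∑ j, (A y)⁻¹ k i * A y i j * x j * fderiv ℝ h y (esingle k) := by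
          refine Finset.sum_congr rfl fun i _ => ?_
          rw [h𝒜def, Finset.mul_sum]
          refine Finset.sum_congr rfl fun k _ => ?_
          rw [Finset.sum_mul]
          exact Finset.sum_congr rfl fun j _ => by ring
    _ = ∑ k, ∑ j, (∑ i, (A y)⁻¹ k i * A y i j) * (x j * fderiv ℝ h y (esingle k)) := by
          rw [Finset.sum_comm]
          refine Finset.sum_congr rfl fun k _ => ?_
          rw [Finset.sum_comm]
          refine Finset.sum_congr rfl fun j _ => ?_
          rw [Finset.sum_mul]
          exact Finset.sum_congr rfl fun i _ => by ring
    _ = ∑ i, x i * fderiv ℝ h y (esingle i) := by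
          simp only [← Matrix.mul_apply, hBA, Matrix.one_apply]
          simp [Finset.sum_ite_eq]

/-- Exact computation of `𝓛_ε V`: all singular terms of order `ε^{−1}` cancel and the
result does not depend on `ε`. -/
theorem LKin_V_identity {d m : ℕ}
    (A : EuclideanSpace ℝ (Fin d) → Matrix (Fin d) (Fin d) ℝ)
    (hAinv : ∀ y, IsUnit (A y))
    (σ : EuclideanSpace ℝ (Fin d) → Matrix (Fin d) (Fin m) ℝ)
    (U h : EuclideanSpace ℝ (Fin d) → ℝ)
    (hU : Differentiable ℝ U) (hh : Differentiable ℝ h)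
    (𝒜 : EuclideanSpace ℝ (Fin d) → EuclideanSpace ℝ (Fin d))
    (h𝒜def : ∀ y i, 𝒜 y i = ∑ j, (A y)⁻¹ j i * fderiv ℝ h y (esingle j))
    (h𝒜diff : Differentiable ℝ 𝒜)
    (ε : ℝ) (hε : ε ≠ 0) (η : ℝ) :
    ∀ x y : EuclideanSpace ℝ (Fin d),
      LKin A σ U ε (Vfun U h 𝒜 ε η) x y
        = -2 * (∑ i, (∑ j, A y i j * x j) * x i)
          + η * (∑ i, ∑ j, x i * x j * fderiv ℝ (fun y' => 𝒜 y' i) y (esingle j))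
          - η * (∑ i, 𝒜 y i * fderiv ℝ U y (esingle i))
          + 2 * (∑ i, (σ y * (σ y)ᵀ) i i) := by
  intro x y
  simp only [LKin, fderiv_Vx, fderiv2_Vx, fderiv_Vy ε η hU hh h𝒜diff]
  -- abbreviations
  set P := ∑ i, (∑ j, A y i j * x j) * x i with hP
  set Q := ∑ i, x i * fderiv ℝ h y (esingle i) with hQ
  set R := ∑ i, x i * fderiv ℝ U y (esingle i) with hR
  set W := ∑ i, 𝒜 y i * fderiv ℝ U y (esingle i) with hW
  set T := ∑ i, ∑ j, x i * x j * fderiv ℝ (fun y' => 𝒜 y' i) y (esingle j) with hT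
  set Tr := ∑ i, (σ y * (σ y)ᵀ) i i with hTr
  have e1 : ∑ i, ∑ j, (σ y * (σ y)ᵀ) i j * (2 * ε ^ 2 * if i = j then 1 else 0)
      = 2 * ε ^ 2 * Tr := by
    rw [hTr, Finset.mul_sum]
    refine Finset.sum_congr rfl fun i _ => ?_
    rw [Finset.sum_eq_single i (fun j _ hj => by simp [Ne.symm hj]) (by simp)]
    simp [mul_comm]
  have e2 : ∑ i, (∑ j, A y i j * x j) * (2 * ε ^ 2 * x i + η * ε * 𝒜 y i)
      = 2 * ε ^ 2 * P + η * ε * Q := by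
    rw [hP, hQ, ← key_cancel A hAinv h 𝒜 h𝒜def x y, Finset.mul_sum, Finset.mul_sum,
      ← Finset.sum_add_distrib]
    exact Finset.sum_congr rfl fun i _ => by ring
  have e3 : ∑ i, x i * (2 * ε ^ 2 * fderiv ℝ U y (esingle i)
        + η * ε * (∑ k, x k * fderiv ℝ (fun y' => 𝒜 y' k) y (esingle i))
        + η * fderiv ℝ h y (esingle i))
      = 2 * ε ^ 2 * R + η * ε * T + η * Q := by
    have hT' : T = ∑ i, ∑ k, x i * (x k * fderiv ℝ (fun y' => 𝒜 y' k) y (esingle i)) := by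
      rw [hT, Finset.sum_comm]
      exact Finset.sum_congr rfl fun i _ => Finset.sum_congr rfl fun k _ => by ring
    have step : ∀ i : Fin d, x i * (2 * ε ^ 2 * fderiv ℝ U y (esingle i)
        + η * ε * (∑ k, x k * fderiv ℝ (fun y' => 𝒜 y' k) y (esingle i))
        + η * fderiv ℝ h y (esingle i))
        = 2 * ε ^ 2 * (x i * fderiv ℝ U y (esingle i))
          + η * ε * (∑ k, x i * (x k * fderiv ℝ (fun y' => 𝒜 y' k) y (esingle i)))
          + η * (x i * fderiv ℝ h y (esingle i)) := by
      intro i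
      have hS : x i * (∑ k, x k * fderiv ℝ (fun y' => 𝒜 y' k) y (esingle i))
          = ∑ k, x i * (x k * fderiv ℝ (fun y' => 𝒜 y' k) y (esingle i)) :=
        Finset.mul_sum _ _ _
      rw [← hS]
      ring
    simp only [step]
    rw [Finset.sum_add_distrib, Finset.sum_add_distrib, ← Finset.mul_sum, ← Finset.mul_sum,
      ← Finset.mul_sum, hR, hQ, hT']
  have e4 : ∑ i, fderiv ℝ U y (esingle i) * (2 * ε ^ 2 * x i + η * ε * 𝒜 y i)
      = 2 * ε ^ 2 * R + η * ε * W := by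
    rw [hR, hW, Finset.mul_sum, Finset.mul_sum, ← Finset.sum_add_distrib]
    exact Finset.sum_congr rfl fun i _ => by ring
  rw [e1, e2, e3, e4]
  field_simp
  ring
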